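/- arXiv:1505.04304 — 2 statements merged into one kernel-verified Lean document; each statement's English description precedes it below -/
import Mathlib

section
/- Let N be a large subalgebra of the pseudo MV-algebra M = Γ(G,u) (so M is an essential extension of N). If S ⊆ N and v ∈ N is the least upper bound of S within N, then v is also the least upper bound of S within M. -/
variable {G : Type*} [Lattice G] [AddGroup G]
  [CovariantClass G G (· + ·) (· ≤ ·)]
  [CovariantClass G G (Function.swap (· + ·)) (· ≤ ·)]

/-- `u` is a strong unit of the lattice-ordered group `G`. -/
def IsStrongUnit (u : G) : Prop := 0 ≤ u ∧ ∀ x : G, ∃ n : ℕ, x ≤ n • u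

/-- The operation `x ⊕ y := (x + y) ⊓ u` of the pseudo MV-algebra `Γ(G,u)`. -/
def oplus (u x y : G) : G := (x + y) ⊓ u

/-- The operation `x ⊙ y := (x - u + y) ⊔ 0` of the pseudo MV-algebra `Γ(G,u)`. -/
def odot (u x y : G) : G := (x - u + y) ⊔ 0

/-- `n.x := x ⊕ ⋯ ⊕ x` (`n` summands), with `0.x = 0`. -/
def nOplus (u : G) : ℕ → G → G
  | 0, _ => 0
  | n + 1, x => oplus u (nOplus u n x) x

/-- `I` is an ideal of the pseudo MV-algebra with carrier `C ⊆ Γ(G,u)`: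
a nonempty subset of `C`, downward closed within `C`, and closed under `⊕`. -/
def IsIdealIn (u : G) (C I : Set G) : Prop :=
  I ⊆ C ∧ I.Nonempty ∧ (∀ x ∈ I, ∀ y ∈ C, y ≤ x → y ∈ I) ∧
    ∀ x ∈ I, ∀ y ∈ I, oplus u x y ∈ I

/-- `I` is a normal ideal: `x ⊕ I = I ⊕ x` for all `x ∈ C`. -/
def IsNormalIdealIn (u : G) (C I : Set G) : Prop :=
  IsIdealIn u C I ∧ ∀ x ∈ C, (fun i => oplus u x i) '' I = (fun i => oplus u i x) '' I

/-- `⟨X⟩_n`, the smallest normal ideal (of the carrier `C`) containing `X`. -/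
def normalGenIn (u : G) (C X : Set G) : Set G :=
  ⋂₀ {I | IsNormalIdealIn u C I ∧ X ⊆ I}

/-- The polar `X^⊥ = {y ∈ C : y ∧ x = 0 for all x ∈ X}` computed in carrier `C`. -/
def polarIn (C X : Set G) : Set G := {y ∈ C | ∀ x ∈ X, y ⊓ x = 0}

/-- `A ⊕ B := {a ⊕ b : a ∈ A, b ∈ B}`. -/
def setOplus (u : G) (A B : Set G) : Set G := Set.image2 (oplus u) A B

/-- `↓a` computed within the carrier `C`. -/
def dsetIn (C : Set G) (a : G) : Set G := {x ∈ C | x ≤ a}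

/-- `I` is a summand-ideal of the carrier `C`: a normal ideal such that for
some normal ideal `J`, `I ∩ J = {0}` and `⟨I ∪ J⟩_n = C`. -/
def IsSummandIdealIn (u : G) (C I : Set G) : Prop :=
  IsNormalIdealIn u C I ∧ ∃ J, IsNormalIdealIn u C J ∧ I ∩ J = {0} ∧
    normalGenIn u C (I ∪ J) = C

/-- `I` is a polar ideal of the carrier `C`: `I = I^⊥⊥`. -/
def IsPolarIdealIn (C I : Set G) : Prop := polarIn C (polarIn C I) = I

/-- `a` is a Boolean element of the carrier `C`: `a ∈ C` and `a ⊕ a = a`. -/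
def IsBooleanIn (u : G) (C : Set G) (a : G) : Prop := a ∈ C ∧ oplus u a a = a

/-- The carrier `C` is strongly projectable: every polar ideal is a summand-ideal. -/
def IsStronglyProjectableIn (u : G) (C : Set G) : Prop :=
  ∀ I : Set G, IsPolarIdealIn C I → IsSummandIdealIn u C I

/-- `N` is a subalgebra of `Γ(G,u)`: contains `0` and `u`, closed under `⊕`,
`x⁻ = u - x` and `x∼ = -x + u`. -/
def IsSubalg (u : G) (N : Set G) : Prop :=
  N ⊆ Set.Icc 0 u ∧ 0 ∈ N ∧ u ∈ N ∧
    (∀ x ∈ N, ∀ y ∈ N, oplus u x y ∈ N) ∧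
    (∀ x ∈ N, u - x ∈ N) ∧ (∀ x ∈ N, -x + u ∈ N)

/-- `N` is a large subalgebra of `Γ(G,u)`: for every nonzero `y ∈ Γ(G,u)` there
are `n ∈ ℕ` and a nonzero `x ∈ N` with `x ≤ n.y`. -/
def IsLargeSubalg (u : G) (N : Set G) : Prop :=
  IsSubalg u N ∧ ∀ y ∈ Set.Icc (0 : G) u, y ≠ 0 →
    ∃ n : ℕ, ∃ x ∈ N, x ≠ 0 ∧ x ≤ nOplus u n y

/-- `N` is closed under `⊙`. -/
lemma odot_mem (u : G) {N : Set G} (hsub : IsSubalg u N) {x y : G}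
    (hx : x ∈ N) (hy : y ∈ N) : odot u x y ∈ N := by
  obtain ⟨hIcc, h0, huN, hop, hc1, hc2⟩ := hsub
  have key : odot u x y = u - (oplus u (-y + u) (-x + u)) := by
    simp [odot, oplus, sub_eq_add_neg, neg_inf, add_sup, neg_add_rev, add_assoc]
  rw [key]
  exact hc1 _ (hop _ (hc2 _ hy) _ (hc2 _ hx))

/-- `N` is closed under `⊓`. -/
lemma inf_mem (u : G) {N : Set G} (hsub : IsSubalg u N) {x y : G}
    (hx : x ∈ N) (hy : y ∈ N) : x ⊓ y ∈ N := by
  have hx0 : 0 ≤ x := (hsub.1 hx).1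
  have hy0 : 0 ≤ y := (hsub.1 hy).1
  have key : x ⊓ y = odot u x (oplus u (u - x) y) := by
    have e1 : odot u x (oplus u (u - x) y) = (y ⊓ x) ⊔ 0 := by
      simp [odot, oplus, sub_eq_add_neg, add_inf, add_assoc]
    rw [e1, sup_eq_left.mpr (le_inf hy0 hx0), inf_comm]
  rw [key]
  exact odot_mem u hsub hx (hsub.2.2.2.1 _ (hsub.2.2.2.2.1 _ hx) _ hy)

lemma inf_add_le3 {a b c : G} (ha : 0 ≤ a) (hb : 0 ≤ b) (hc : 0 ≤ c) :
    a ⊓ (b + c) ≤ (a ⊓ b) + (a ⊓ c) := by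
  have h1 : (a ⊓ b) + (a ⊓ c) = ((a + a) ⊓ (b + a)) ⊓ ((a + c) ⊓ (b + c)) := by
    rw [add_inf, inf_add, inf_add]
  rw [h1]
  refine le_inf (le_inf ?_ ?_) (le_inf ?_ ?_)
  · exact inf_le_left.trans (le_add_of_nonneg_right ha)
  · exact inf_le_left.trans (le_add_of_nonneg_left hb)
  · exact inf_le_left.trans (le_add_of_nonneg_right hc)
  · exact inf_le_right

lemma inf_nsmul_zero {a b : G} (ha : 0 ≤ a) (hb : 0 ≤ b) (h : a ⊓ b = 0) :
    ∀ n : ℕ, a ⊓ (n • b) = 0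
  | 0 => by rw [zero_nsmul]; exact inf_eq_right.mpr ha
  | n + 1 => by
    have h1 : a ⊓ ((n + 1) • b) ≤ 0 := by
      rw [succ_nsmul]
      calc a ⊓ (n • b + b) ≤ (a ⊓ (n • b)) + (a ⊓ b) :=
            inf_add_le3 ha (nsmul_nonneg hb n) hb
        _ = 0 := by rw [inf_nsmul_zero ha hb h n, h, add_zero]
    exact le_antisymm h1 (le_inf ha (nsmul_nonneg hb (n + 1)))

lemma nOplus_le_nsmul (u y : G) : ∀ n : ℕ, nOplus u n y ≤ n • y
  | 0 => by simp [nOplus]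
  | n + 1 => by
    rw [succ_nsmul]
    exact le_trans inf_le_left (add_le_add_left (nOplus_le_nsmul u y n) y)

theorem key_aux (u : G) {N : Set G} (hsub : IsSubalg u N) {S : Set G} (hS : S ⊆ N)
    {v z : G} (hv : v ∈ N) (hub : ∀ s ∈ S, s ≤ v)
    (hlb : ∀ w ∈ N, (∀ s ∈ S, s ≤ w) → v ≤ w)
    (hz0 : 0 ≤ z) (hsz : ∀ s ∈ S, s + z ≤ v) :
    ∀ m : ℕ, ∀ c ∈ N, c ≤ m • z → c ≤ v → c = 0 := by
  have hIcc := hsub.1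
  intro m
  induction m with
  | zero =>
    intro c hcN hc _
    rw [zero_nsmul] at hc
    exact le_antisymm hc (hIcc hcN).1
  | succ m ih =>
    intro c hcN hcle hcv
    by_cases hbt : ∀ s ∈ S, s ≤ (v + -c) ⊔ 0
    · -- t = (v + -c) ⊔ 0 is an N-upper bound of S, so v ≤ t, forcing c = 0
      have htN : (v + -c) ⊔ 0 ∈ N := by
        have h1 : odot u v (u - c) ∈ N := odot_mem u hsub hv (hsub.2.2.2.2.1 _ hcN)
        have e : odot u v (u - c) = (v + -c) ⊔ 0 := by
          simp [odot, sub_eq_add_neg, add_assoc]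
        rwa [e] at h1
      have hvt := hlb _ htN hbt
      have hsup : (v + -c) ⊔ 0 = v + -c := by
        refine sup_eq_left.mpr ?_
        have h2 : v + -v ≤ v + -c := add_le_add_right (neg_le_neg_iff.mpr hcv) v
        simpa using h2
      rw [hsup] at hvt
      have h3 : 0 ≤ -c := by
        have := add_le_add_left hvt (-v)
        simpa using this
      exact le_antisymm (neg_nonneg.mp h3) (hIcc hcN).1
    · push_neg at hbt
      obtain ⟨s₀, hs₀S, hs₀⟩ := hbt
      have hs₀N := hS hs₀S
      have hb0 : 0 ≤ -s₀ + v := by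
        have := add_le_add_left (hub s₀ hs₀S) (-s₀)
        simpa using this
      have hbN : -s₀ + v ∈ N := by
        have h1 : odot u (-s₀ + u) v ∈ N :=
          odot_mem u hsub (hsub.2.2.2.2.2 _ hs₀N) hv
        have e : odot u (-s₀ + u) v = -s₀ + v := by
          have e1 : odot u (-s₀ + u) v = (-s₀ + v) ⊔ 0 := by
            simp [odot, sub_eq_add_neg, add_assoc]
          rw [e1]; exact sup_eq_left.mpr hb0
        rwa [e] at h1
      have hzb : z ≤ -s₀ + v := by
        have h1 := add_le_add_left (hsz s₀ hs₀S) (-s₀)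
        simpa [← add_assoc] using h1
      -- c' = c ⊖ b
      have hc'N : (c + -(-s₀ + v)) ⊔ 0 ∈ N := by
        have h1 : odot u c (u - (-s₀ + v)) ∈ N :=
          odot_mem u hsub hcN (hsub.2.2.2.2.1 _ hbN)
        have e : odot u c (u - (-s₀ + v)) = (c + -(-s₀ + v)) ⊔ 0 := by
          simp [odot, sub_eq_add_neg, add_assoc]
        rwa [e] at h1
      have hc'c : (c + -(-s₀ + v)) ⊔ 0 ≤ c := by
        refine sup_le ?_ (hIcc hcN).1
        have := add_le_add_left (neg_nonpos.mpr hb0) c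
        simpa using this
      have hc'le : (c + -(-s₀ + v)) ⊔ 0 ≤ m • z := by
        refine sup_le ?_ (nsmul_nonneg hz0 m)
        calc c + -(-s₀ + v) ≤ (m + 1) • z + -z :=
              add_le_add (hcle.trans (le_refl _)) (neg_le_neg_iff.mpr hzb)
          _ = m • z := by rw [succ_nsmul, add_assoc, add_neg_cancel, add_zero]
      have hc'0 : (c + -(-s₀ + v)) ⊔ 0 = 0 :=
        ih _ hc'N hc'le (hc'c.trans hcv)
      -- contradiction with hs₀
      exfalso
      apply hs₀
      have hcb : c ≤ -s₀ + v := by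
        have h1 : c + -(-s₀ + v) ≤ 0 := le_sup_left.trans_eq hc'0
        have h2 := add_le_add_left h1 (-s₀ + v)
        simpa [add_assoc] using h2
      have h3 : s₀ + c ≤ v := by
        have := add_le_add_left hcb s₀
        simpa [← add_assoc] using this
      have h4 : s₀ ≤ v + -c := by
        have := add_le_add_right h3 (-c)
        simpa [add_assoc] using this
      exact le_sup_of_le_left h4

theorem stmt13 (u : G) (hu : IsStrongUnit u) (N : Set G)
    (hN : IsLargeSubalg u N) (S : Set G) (hS : S ⊆ N) (v : G) (hv : v ∈ N)
    (hub : ∀ s ∈ S, s ≤ v)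
    (hlb : ∀ w ∈ N, (∀ s ∈ S, s ≤ w) → v ≤ w) :
    (∀ s ∈ S, s ≤ v) ∧ ∀ w ∈ Set.Icc (0 : G) u, (∀ s ∈ S, s ≤ w) → v ≤ w := by
  obtain ⟨hsub, hlarge⟩ := hN
  have hIcc := hsub.1
  refine ⟨hub, ?_⟩
  rintro w ⟨hw0, hwu⟩ hubw
  have hv0 : 0 ≤ v := (hIcc hv).1
  have hvu : v ≤ u := (hIcc hv).2
  have hpv : v ⊓ w ≤ v := inf_le_left
  have hp0 : 0 ≤ v ⊓ w := le_inf hv0 hw0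
  have hz0 : 0 ≤ -(v ⊓ w) + v := by
    have := add_le_add_left hpv (-(v ⊓ w)); simpa using this
  have hzv : -(v ⊓ w) + v ≤ v := by
    have := add_le_add_right (neg_nonpos.mpr hp0) v; simpa using this
  have hzu : -(v ⊓ w) + v ≤ u := hzv.trans hvu
  have hsz : ∀ s ∈ S, s + (-(v ⊓ w) + v) ≤ v := by
    intro s hs
    have h1 : s + (-(v ⊓ w) + v) ≤ (v ⊓ w) + (-(v ⊓ w) + v) :=
      add_le_add_left (le_inf (hub s hs) (hubw s hs)) _
    simpa using h1
  suffices hzz : -(v ⊓ w) + v = 0 by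
    have h2 : v ⊓ w = v := neg_add_eq_zero.mp hzz
    rw [← h2]; exact inf_le_right
  by_contra hzne
  obtain ⟨n, x, hxN, hxne, hxle⟩ := hlarge _ ⟨hz0, hzu⟩ hzne
  have hx0 : 0 ≤ x := (hIcc hxN).1
  have hxz : x ≤ n • (-(v ⊓ w) + v) := hxle.trans (nOplus_le_nsmul u _ n)
  have h0 : x ⊓ v = 0 :=
    key_aux u hsub hS hv hub hlb hz0 hsz n (x ⊓ v) (inf_mem u hsub hxN hv)
      (inf_le_left.trans hxz) inf_le_right
  have hxz0 : x ⊓ (-(v ⊓ w) + v) = 0 :=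
    le_antisymm ((inf_le_inf_left x hzv).trans h0.le) (le_inf hx0 hz0)
  have hfin := inf_nsmul_zero hx0 hz0 hxz0 n
  exact hxne ((inf_eq_left.mpr hxz).symm.trans hfin)
end

section
/- Let N be a subalgebra of the pseudo MV-algebra M = Γ(G,u) such that both N and M are strongly projectable. Then for every polar ideal I of N there is a unique Boolean element b ∈ N such that I = ↓_N b and (I^{⊥_N})^{⊥_M} = ↓_M b. -/
variable {G : Type*} [Lattice G] [AddGroup G]
  [CovariantClass G G (· + ·) (· ≤ ·)]
  [CovariantClass G G (Function.swap (· + ·)) (· ≤ ·)]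

lemma aux_inf_add (x y z : G) (hx : 0 ≤ x) (hy : 0 ≤ y) (hz : 0 ≤ z) :
    x ⊓ (y + z) ≤ (x ⊓ y) + (x ⊓ z) := by
  rw [inf_add, add_inf, add_inf]
  refine le_inf (le_inf ?_ ?_) (le_inf ?_ inf_le_right)
  · exact inf_le_left.trans (le_add_of_nonneg_right hx)
  · exact inf_le_left.trans (le_add_of_nonneg_right hz)
  · exact inf_le_left.trans (le_add_of_nonneg_left hy)

lemma oplus_clamp {u : G} (A B : G) (hA : 0 ≤ A) (hB : 0 ≤ B) (hu0 : 0 ≤ u) :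
    oplus u (A ⊓ u) (B ⊓ u) = (A + B) ⊓ u := by
  unfold oplus
  rw [inf_add, add_inf, add_inf]
  apply le_antisymm
  · exact le_inf (inf_le_left.trans (inf_le_left.trans inf_le_left)) inf_le_right
  · refine le_inf (le_inf (le_inf inf_le_left ?_) (le_inf ?_ ?_)) inf_le_right
    · exact inf_le_right.trans (le_add_of_nonneg_left hA)
    · exact inf_le_right.trans (le_add_of_nonneg_right hB)
    · exact inf_le_right.trans (le_add_of_nonneg_left hu0)

lemma oplus3l {u : G} (x y z : G) (hz : 0 ≤ z) :
    oplus u (oplus u x y) z = (x + y + z) ⊓ u := by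
  unfold oplus
  rw [inf_add, inf_assoc]
  congr 1
  exact inf_eq_right.mpr (le_add_of_nonneg_right hz)

lemma oplus3r {u : G} (x y z : G) (hx : 0 ≤ x) :
    oplus u x (oplus u y z) = (x + y + z) ⊓ u := by
  unfold oplus
  rw [add_inf, inf_assoc, add_assoc]
  congr 1
  exact inf_eq_right.mpr (le_add_of_nonneg_left hx)

lemma oplus_mono {u : G} {x x' y y' : G} (h1 : x ≤ x') (h2 : y ≤ y') :
    oplus u x y ≤ oplus u x' y' :=
  inf_le_inf_right u (add_le_add h1 h2)


lemma inner_clamp {u : G} (a b C : G) (ha : 0 ≤ a) (hb : 0 ≤ b) :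
    (a + (C ⊓ u) + b) ⊓ u = (a + C + b) ⊓ u := by
  rw [add_inf, inf_add, inf_assoc]
  congr 1
  exact inf_eq_right.mpr ((le_add_of_nonneg_left ha).trans (le_add_of_nonneg_right hb))

lemma odot_via {u : G} (x y : G) :
    odot u x y = -(oplus u (u - y) (u - x)) + u := by
  unfold odot oplus
  rw [neg_inf, sup_add]
  congr 1
  · simp [sub_eq_add_neg, neg_add_rev, add_assoc]
  · simp

lemma inf_via {u : G} (x y : G) (h : 0 ≤ x ⊓ y) :
    x ⊓ y = odot u x (oplus u (u - x) y) := by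
  unfold odot oplus
  rw [add_inf]
  have h1 : x - u + (u - x + y) = y := by
    simp [sub_eq_add_neg, add_assoc]
  have h2 : x - u + u = x := by simp [sub_eq_add_neg, add_assoc]
  rw [h1, h2, inf_comm y x, sup_eq_left.mpr h]

theorem stmt14 (u : G) (hu : IsStrongUnit u) (N : Set G) (hN : IsSubalg u N)
    (hNsp : IsStronglyProjectableIn u N)
    (hMsp : IsStronglyProjectableIn u (Set.Icc (0 : G) u))
    (I : Set G) (hI : IsPolarIdealIn N I) :
    ∃! b : G, IsBooleanIn u N b ∧ I = dsetIn N b ∧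
      polarIn (Set.Icc (0 : G) u) (polarIn N I) = dsetIn (Set.Icc (0 : G) u) b := by
  obtain ⟨hNIcc, h0N, huN, hoplusN, hsubN, hnegN⟩ := hN
  have hu0 : (0 : G) ≤ u := hu.1
  have hpos : ∀ x ∈ N, 0 ≤ x := fun x hx => (hNIcc hx).1
  have hleu : ∀ x ∈ N, x ≤ u := fun x hx => (hNIcc hx).2
  have hodotN : ∀ x ∈ N, ∀ y ∈ N, odot u x y ∈ N := by
    intro x hx y hy
    rw [odot_via]
    exact hnegN _ (hoplusN _ (hsubN y hy) _ (hsubN x hx))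
  have hinfN : ∀ x ∈ N, ∀ y ∈ N, x ⊓ y ∈ N := by
    intro x hx y hy
    rw [inf_via x y (le_inf (hpos x hx) (hpos y hy))]
    exact hodotN _ hx _ (hoplusN _ (hsubN x hx) _ hy)
  obtain ⟨hInorm, J, hJnorm, hIJinter, hIJgen⟩ := hNsp I hI
  obtain ⟨⟨hIsub, hIne, hIdown, hIoplus⟩, hInormal⟩ := hInorm
  obtain ⟨⟨hJsub, hJne, hJdown, hJoplus⟩, hJnormal⟩ := hJnorm
  -- extract normality in element form
  have hInorm_fw : ∀ x ∈ N, ∀ a ∈ I, ∃ a' ∈ I, oplus u x a = oplus u a' x := by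
    intro x hx a ha
    have h : oplus u x a ∈ (fun i => oplus u i x) '' I := by
      rw [← hInormal x hx]; exact ⟨a, ha, rfl⟩
    obtain ⟨a', ha', he⟩ := h
    exact ⟨a', ha', he.symm⟩
  have hInorm_bw : ∀ x ∈ N, ∀ a ∈ I, ∃ a' ∈ I, oplus u a x = oplus u x a' := by
    intro x hx a ha
    have h : oplus u a x ∈ (fun i => oplus u x i) '' I := by
      rw [hInormal x hx]; exact ⟨a, ha, rfl⟩
    obtain ⟨a', ha', he⟩ := h
    exact ⟨a', ha', he.symm⟩
  have hJnorm_fw : ∀ x ∈ N, ∀ a ∈ J, ∃ a' ∈ J, oplus u x a = oplus u a' x := by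
    intro x hx a ha
    have h : oplus u x a ∈ (fun i => oplus u i x) '' J := by
      rw [← hJnormal x hx]; exact ⟨a, ha, rfl⟩
    obtain ⟨a', ha', he⟩ := h
    exact ⟨a', ha', he.symm⟩
  have hJnorm_bw : ∀ x ∈ N, ∀ a ∈ J, ∃ a' ∈ J, oplus u a x = oplus u x a' := by
    intro x hx a ha
    have h : oplus u a x ∈ (fun i => oplus u x i) '' J := by
      rw [hJnormal x hx]; exact ⟨a, ha, rfl⟩
    obtain ⟨a', ha', he⟩ := h
    exact ⟨a', ha', he.symm⟩
  -- the ideal K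
  set K : Set G := {x ∈ N | ∃ a ∈ I, ∃ b ∈ J, x ≤ oplus u a b} with hKdef
  -- combination lemma: for a1 a2 ∈ I, b1 b2 ∈ J,
  -- oplus (oplus a1 b1) (oplus a2 b2) = oplus (oplus a1 a2') (oplus b1 b2)
  have hcomb : ∀ a₁ ∈ I, ∀ b₁ ∈ J, ∀ a₂ ∈ I, ∀ b₂ ∈ J,
      ∃ a' ∈ I, ∃ b' ∈ J,
        oplus u (oplus u a₁ b₁) (oplus u a₂ b₂) ≤ oplus u a' b' := by
    intro a₁ ha₁ b₁ hb₁ a₂ ha₂ b₂ hb₂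
    obtain ⟨a₂', ha₂', hswap⟩ := hInorm_fw b₁ (hJsub hb₁) a₂ ha₂
    refine ⟨oplus u a₁ a₂', hIoplus _ ha₁ _ ha₂', oplus u b₁ b₂, hJoplus _ hb₁ _ hb₂, ?_⟩
    have e1 : oplus u (oplus u a₁ b₁) (oplus u a₂ b₂)
        = (a₁ + b₁ + (a₂ + b₂)) ⊓ u := by
      rw [show oplus u a₁ b₁ = (a₁ + b₁) ⊓ u from rfl,
        show oplus u a₂ b₂ = (a₂ + b₂) ⊓ u from rfl,
        oplus_clamp _ _ (add_nonneg (hpos _ (hIsub ha₁)) (hpos _ (hJsub hb₁)))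
          (add_nonneg (hpos _ (hIsub ha₂)) (hpos _ (hJsub hb₂))) hu0]
    have e2 : oplus u (oplus u a₁ a₂') (oplus u b₁ b₂)
        = (a₁ + a₂' + (b₁ + b₂)) ⊓ u := by
      rw [show oplus u a₁ a₂' = (a₁ + a₂') ⊓ u from rfl,
        show oplus u b₁ b₂ = (b₁ + b₂) ⊓ u from rfl,
        oplus_clamp _ _ (add_nonneg (hpos _ (hIsub ha₁)) (hpos _ (hIsub ha₂')))
          (add_nonneg (hpos _ (hJsub hb₁)) (hpos _ (hJsub hb₂))) hu0]
    rw [e1, e2]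
    have key : (a₁ + b₁ + (a₂ + b₂)) ⊓ u = (a₁ + a₂' + (b₁ + b₂)) ⊓ u := by
      have ha1 := hpos _ (hIsub ha₁)
      have hb2 := hpos _ (hJsub hb₂)
      calc (a₁ + b₁ + (a₂ + b₂)) ⊓ u
          = (a₁ + (b₁ + a₂) + b₂) ⊓ u := by
            rw [show a₁ + (b₁ + a₂) + b₂ = a₁ + b₁ + (a₂ + b₂) by simp [add_assoc]]
        _ = (a₁ + ((b₁ + a₂) ⊓ u) + b₂) ⊓ u := (inner_clamp a₁ b₂ (b₁ + a₂) ha1 hb2).symm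
        _ = (a₁ + ((a₂' + b₁) ⊓ u) + b₂) ⊓ u := by
            rw [show ((b₁ + a₂) ⊓ u : G) = (a₂' + b₁) ⊓ u from hswap]
        _ = (a₁ + (a₂' + b₁) + b₂) ⊓ u := inner_clamp a₁ b₂ (a₂' + b₁) ha1 hb2
        _ = (a₁ + a₂' + (b₁ + b₂)) ⊓ u := by
            rw [show a₁ + (a₂' + b₁) + b₂ = a₁ + a₂' + (b₁ + b₂) by simp [add_assoc]]
    exact key.le
  -- K is an ideal
  have hKsub : K ⊆ N := fun x hx => hx.1
  have h0K : (0 : G) ∈ K := by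
    obtain ⟨a₀, ha₀⟩ := hIne
    obtain ⟨b₀, hb₀⟩ := hJne
    exact ⟨h0N, a₀, ha₀, b₀, hb₀,
      le_inf (add_nonneg (hpos _ (hIsub ha₀)) (hpos _ (hJsub hb₀))) hu0⟩
  have hIK : I ⊆ K := by
    intro a ha
    obtain ⟨b₀, hb₀⟩ := hJne
    refine ⟨hIsub ha, a, ha, b₀, hb₀, le_inf (le_add_of_nonneg_right (hpos _ (hJsub hb₀)))
      (hleu _ (hIsub ha))⟩
  have hJK : J ⊆ K := by
    intro b hb
    obtain ⟨a₀, ha₀⟩ := hIne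
    refine ⟨hJsub hb, a₀, ha₀, b, hb, le_inf (le_add_of_nonneg_left (hpos _ (hIsub ha₀)))
      (hleu _ (hJsub hb))⟩
  have hKideal : IsIdealIn u N K := by
    refine ⟨hKsub, ⟨0, h0K⟩, ?_, ?_⟩
    · rintro x ⟨hxN, a, ha, b, hb, hle⟩ y hyN hyx
      exact ⟨hyN, a, ha, b, hb, hyx.trans hle⟩
    · rintro x ⟨hxN, a₁, ha₁, b₁, hb₁, hle₁⟩ y ⟨hyN, a₂, ha₂, b₂, hb₂, hle₂⟩
      obtain ⟨a', ha', b', hb', hle⟩ := hcomb a₁ ha₁ b₁ hb₁ a₂ ha₂ b₂ hb₂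
      exact ⟨hoplusN x hxN y hyN, a', ha', b', hb',
        (oplus_mono hle₁ hle₂).trans hle⟩
  -- K is normal
  have hKnormal : ∀ x ∈ N, (fun i => oplus u x i) '' K = (fun i => oplus u i x) '' K := by
    intro x hxN
    have hx0 : 0 ≤ x := hpos x hxN
    have hxu : x ≤ u := hleu x hxN
    apply Set.Subset.antisymm
    · rintro _ ⟨k, ⟨hkN, a, ha, b, hb, hkle⟩, rfl⟩
      set m : G := ((x + k) ⊓ u) - x with hm
      have hxk : x ≤ (x + k) ⊓ u :=
        le_inf (le_add_of_nonneg_right (hpos k hkN)) hxu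
      have hmN : m ∈ N := by
        have : m = odot u (oplus u x k) (u - x) := by
          unfold odot oplus
          rw [show (x + k) ⊓ u - u + (u - x) = (x + k) ⊓ u - x by
            simp [sub_eq_add_neg, add_assoc]]
          exact (sup_eq_left.mpr (sub_nonneg.mpr hxk)).symm
        rw [this]
        exact hodotN _ (hoplusN x hxN k hkN) _ (hsubN x hxN)
      have hmx : oplus u m x = oplus u x k := by
        unfold oplus
        rw [hm, sub_add_cancel]
        exact inf_eq_left.mpr inf_le_right
      -- bound for m
      obtain ⟨a', ha', hea⟩ := hInorm_fw x hxN a ha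
      obtain ⟨b', hb', heb⟩ := hJnorm_fw x hxN b hb
      have hbound : oplus u x k ≤ (a' + b' + x) ⊓ u := by
        have s1 : oplus u x k ≤ oplus u x (oplus u a b) :=
          oplus_mono le_rfl hkle
        have s2 : oplus u x (oplus u a b) = (x + a + b) ⊓ u :=
          oplus3r x a b hx0
        have s3 : (x + a + b) ⊓ u = oplus u (oplus u x a) b :=
          (oplus3l x a b (hpos b (hJsub hb))).symm
        have s4 : oplus u (oplus u x a) b = oplus u (oplus u a' x) b := by rw [hea]
        have s5 : oplus u (oplus u a' x) b = (a' + x + b) ⊓ u :=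
          oplus3l a' x b (hpos b (hJsub hb))
        have s6 : (a' + x + b) ⊓ u = oplus u a' (oplus u x b) :=
          (oplus3r a' x b (hpos a' (hIsub ha'))).symm
        have s7 : oplus u a' (oplus u x b) = oplus u a' (oplus u b' x) := by rw [heb]
        have s8 : oplus u a' (oplus u b' x) = (a' + b' + x) ⊓ u :=
          oplus3r a' b' x (hpos a' (hIsub ha'))
        calc oplus u x k ≤ oplus u x (oplus u a b) := s1
          _ = (a' + b' + x) ⊓ u := by rw [s2, s3, s4, s5, s6, s7, s8]
      have hmle : m ≤ oplus u a' b' := by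
        unfold oplus
        refine le_inf ?_ ?_
        · have : m ≤ ((a' + b' + x) ⊓ u) - x := sub_le_sub_right hbound x
          calc m ≤ ((a' + b' + x) ⊓ u) - x := this
            _ ≤ (a' + b' + x) - x := sub_le_sub_right inf_le_left x
            _ = a' + b' := by simp [sub_eq_add_neg, add_assoc]
        · calc m ≤ u - x := sub_le_sub_right inf_le_right x
            _ ≤ u - 0 := sub_le_sub_left hx0 u
            _ = u := sub_zero u
      exact ⟨m, ⟨hmN, a', ha', b', hb', hmle⟩, hmx⟩
    · rintro _ ⟨k, ⟨hkN, a, ha, b, hb, hkle⟩, rfl⟩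
      set m : G := -x + ((k + x) ⊓ u) with hm
      have hxk : x ≤ (k + x) ⊓ u :=
        le_inf (le_add_of_nonneg_left (hpos k hkN)) hxu
      have hmN : m ∈ N := by
        have : m = odot u (-x + u) (oplus u k x) := by
          unfold odot oplus
          rw [show -x + u - u + ((k + x) ⊓ u) = -x + ((k + x) ⊓ u) by
            simp [sub_eq_add_neg, add_assoc]]
          exact (sup_eq_left.mpr (by
            rw [hm]; rw [le_neg_add_iff_add_le, add_zero]; exact hxk)).symm
        rw [this]
        exact hodotN _ (hnegN x hxN) _ (hoplusN k hkN x hxN)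
      have hmx : oplus u x m = oplus u k x := by
        unfold oplus
        rw [hm, add_neg_cancel_left]
        exact inf_eq_left.mpr inf_le_right
      obtain ⟨b', hb', heb⟩ := hJnorm_bw x hxN b hb
      obtain ⟨a', ha', hea⟩ := hInorm_bw x hxN a ha
      have hbound : oplus u k x ≤ (x + (a' + b')) ⊓ u := by
        have s1 : oplus u k x ≤ oplus u (oplus u a b) x :=
          oplus_mono hkle le_rfl
        have s2 : oplus u (oplus u a b) x = (a + b + x) ⊓ u :=
          oplus3l a b x hx0
        have s3 : (a + b + x) ⊓ u = oplus u a (oplus u b x) :=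
          (oplus3r a b x (hpos a (hIsub ha))).symm
        have s4 : oplus u a (oplus u b x) = oplus u a (oplus u x b') := by rw [heb]
        have s5 : oplus u a (oplus u x b') = (a + x + b') ⊓ u :=
          oplus3r a x b' (hpos a (hIsub ha))
        have s6 : (a + x + b') ⊓ u = oplus u (oplus u a x) b' :=
          (oplus3l a x b' (hpos b' (hJsub hb'))).symm
        have s7 : oplus u (oplus u a x) b' = oplus u (oplus u x a') b' := by rw [hea]
        have s8 : oplus u (oplus u x a') b' = (x + a' + b') ⊓ u :=
          oplus3l x a' b' (hpos b' (hJsub hb'))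
        calc oplus u k x ≤ oplus u (oplus u a b) x := s1
          _ = (x + a' + b') ⊓ u := by rw [s2, s3, s4, s5, s6, s7, s8]
          _ = (x + (a' + b')) ⊓ u := by rw [add_assoc]
      have hmle : m ≤ oplus u a' b' := by
        unfold oplus
        refine le_inf ?_ ?_
        · calc m = -x + ((k + x) ⊓ u) := hm
            _ ≤ -x + (x + (a' + b')) := add_le_add_right (hbound.trans inf_le_left) _
            _ = a' + b' := neg_add_cancel_left _ _
        · calc m ≤ -x + u := add_le_add_right inf_le_right _
            _ ≤ 0 + u := add_le_add_left (neg_nonpos.mpr hx0) u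
            _ = u := zero_add u
      exact ⟨m, ⟨hmN, a', ha', b', hb', hmle⟩, hmx⟩
  have hKnorm : IsNormalIdealIn u N K := ⟨hKideal, hKnormal⟩
  have huK : u ∈ K := by
    have h1 : u ∈ normalGenIn u N (I ∪ J) := by rw [hIJgen]; exact huN
    exact Set.mem_sInter.mp h1 K ⟨hKnorm, Set.union_subset hIK hJK⟩
  obtain ⟨-, a, haI, b, hbJ, hule⟩ := huK
  have haN := hIsub haI
  have hbN := hJsub hbJ
  have ha0 := hpos a haN
  have hau := hleu a haN
  have hb0 := hpos b hbN
  have hab : u ≤ a + b := hule.trans inf_le_left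
  have hdisj : ∀ x ∈ I, x ⊓ b = 0 := by
    intro x hx
    have hmemN : x ⊓ b ∈ N := hinfN x (hIsub hx) b hbN
    have h1 : x ⊓ b ∈ I := hIdown x hx _ hmemN inf_le_left
    have h2 : x ⊓ b ∈ J := hJdown b hbJ _ hmemN inf_le_right
    have h3 : x ⊓ b ∈ ({0} : Set G) := hIJinter ▸ Set.mem_inter h1 h2
    exact h3
  have hIlea : ∀ x ∈ I, x ≤ a := by
    intro x hx
    have hx0 := hpos x (hIsub hx)
    have hxu := hleu x (hIsub hx)
    have h3 : x ≤ (x ⊓ a) + (x ⊓ b) :=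
      (le_inf le_rfl (hxu.trans hab)).trans (aux_inf_add x a b hx0 ha0 hb0)
    rw [hdisj x hx, add_zero] at h3
    exact h3.trans inf_le_right
  have hIeq : I = dsetIn N a := by
    apply Set.Subset.antisymm
    · exact fun x hx => ⟨hIsub hx, hIlea x hx⟩
    · rintro x ⟨hxN, hxa⟩
      exact hIdown a haI x hxN hxa
  have haab : a ⊓ b = 0 := hdisj a haI
  have hBool : IsBooleanIn u N a := by
    refine ⟨haN, le_antisymm ?_ (le_inf (le_add_of_nonneg_left ha0) hau)⟩
    calc (a + a) ⊓ u ≤ (a + a) ⊓ (a + b) := le_inf inf_le_left (inf_le_right.trans hab)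
      _ = a + (a ⊓ b) := (add_inf a b a).symm
      _ = a := by rw [haab, add_zero]
  have hbpolar : b ∈ polarIn N I := by
    refine ⟨hbN, fun x hx => ?_⟩
    rw [inf_comm b x]
    exact hdisj x hx
  have hpolarEq : polarIn (Set.Icc (0:G) u) (polarIn N I) = dsetIn (Set.Icc (0:G) u) a := by
    apply Set.Subset.antisymm
    · rintro y ⟨hyM, hy⟩
      have hyb : y ⊓ b = 0 := hy b hbpolar
      have hy0 : (0:G) ≤ y := hyM.1
      have hyu : y ≤ u := hyM.2
      have h3 : y ≤ (y ⊓ a) + (y ⊓ b) :=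
        (le_inf le_rfl (hyu.trans hab)).trans (aux_inf_add y a b hy0 ha0 hb0)
      rw [hyb, add_zero] at h3
      exact ⟨hyM, h3.trans inf_le_right⟩
    · rintro y ⟨hyM, hya⟩
      refine ⟨hyM, fun z hz => ?_⟩
      have hza : z ⊓ a = 0 := hz.2 a haI
      have hz0 : (0:G) ≤ z := hpos z hz.1
      refine le_antisymm ?_ (le_inf hyM.1 hz0)
      calc y ⊓ z ≤ a ⊓ z := inf_le_inf_right z hya
        _ = z ⊓ a := inf_comm a z
        _ = 0 := hza
  refine ⟨a, ⟨hBool, hIeq, hpolarEq⟩, ?_⟩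
  rintro b' ⟨hb'B, hb'I, -⟩
  have hab' : a ≤ b' := by
    have h : a ∈ dsetIn N b' := hb'I ▸ haI
    exact h.2
  have hb'a : b' ≤ a := by
    have h : b' ∈ dsetIn N b' := ⟨hb'B.1, le_rfl⟩
    rw [← hb'I] at h
    exact hIlea b' h
  exact le_antisymm hb'a hab'
end
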